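/- Let K be a field of characteristic 0 and U a nonempty finite subset of ℤ with 2k ≤ |U|, and let d satisfy 2d ≤ k. Then the images in A_{U,k} = P_U/Ann(Φ_{U,k}) of the monomials {x^{M(V)} : V ∈ C(U,2d)} form a basis of the degree-d homogeneous component A^{(d)} as a K-vector space. -/

import Mathlib

open MvPolynomial Finset

noncomputable section

/-- The set of matchings with exactly `k` edges of the complete graph on vertex set `V ⊆ ℤ`:
sets of `k` pairwise disjoint 2-element subsets of `V`. -/
def matchings (V : Finset ℤ) (k : ℕ) : Finset (Finset (Finset ℤ)) :=
  (V.powersetCard 2).powerset.filter fun M =>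
    M.card = k ∧ ∀ e ∈ M, ∀ f ∈ M, e ≠ f → Disjoint e f

/-- `S` is a matching of the complete graph on vertex set `V`. -/
def IsMatching (V : Finset ℤ) (S : Finset (Finset ℤ)) : Prop :=
  S ⊆ V.powersetCard 2 ∧ ∀ e ∈ S, ∀ f ∈ S, e ≠ f → Disjoint e f

/-- The weighted generating function `Φ_{V,k} = Σ_{M ∈ M(V,k)} x^M` of `k`-edge matchings,
an element of the polynomial ring with variables indexed by (potential) edges. -/
def Phi (K : Type*) [Field K] (V : Finset ℤ) (k : ℕ) : MvPolynomial (Finset ℤ) K :=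
  ∑ M ∈ matchings V k, ∏ e ∈ M, X e

/-- The differential operator `∂^S = Π_{i ∈ S} ∂/∂x_i` applied to `p`. -/
def dset {K : Type*} [CommSemiring K] {ι : Type*} [DecidableEq ι]
    (S : Finset ι) (p : MvPolynomial ι K) : MvPolynomial ι K :=
  S.toList.foldr (fun i q => pderiv i q) p

/-- The differential operator `∂^m = Π_i (∂/∂x_i)^{m i}` of a monomial exponent `m`. -/
def dmon {K : Type*} [CommSemiring K] {ι : Type*} [DecidableEq ι]
    (m : ι →₀ ℕ) (p : MvPolynomial ι K) : MvPolynomial ι K :=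
  m.support.toList.foldr (fun i q => (⇑(pderiv (R := K) i))^[m i] q) p

/-- The linear map `f ↦ f(∂)Φ`, where `f(∂)` is obtained from `f` by substituting
`∂/∂x_i` for `x_i`. -/
def diffOp (K : Type*) [Field K] {ι : Type*} [DecidableEq ι]
    (Φ : MvPolynomial ι K) : MvPolynomial ι K →ₗ[K] MvPolynomial ι K :=
  (basisMonomials ι K).constr K fun m => dmon m Φ

/-- The annihilator `Ann(Φ) = {f : f(∂)Φ = 0}`. -/
def Ann (K : Type*) [Field K] {ι : Type*} [DecidableEq ι]
    (Φ : MvPolynomial ι K) : Submodule K (MvPolynomial ι K) :=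
  LinearMap.ker (diffOp K Φ)

/-- The canonical matching `M(V) = {{v₁,v₂},{v₃,v₄},…}` on `V = {v₁ < v₂ < ⋯}`. -/
def canonMatching (V : Finset ℤ) : Finset (Finset ℤ) :=
  (Finset.range (V.card / 2)).image fun i =>
    ({(V.sort (· ≤ ·)).getD (2 * i) 0, (V.sort (· ≤ ·)).getD (2 * i + 1) 0} : Finset ℤ)

/-- The `n`-th elementary symmetric polynomial in the variables indexed by `U`. -/
def elemSymm (K : Type*) [Field K] {ι : Type*} (U : Finset ι) (n : ℕ) : MvPolynomial ι K :=
  ∑ S ∈ U.powersetCard n, ∏ i ∈ S, X i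

end


/-! ### Auxiliary development -/

noncomputable section Aux


variable {K : Type*} [Field K]

/-- indicator finsupp of a finset of edges -/
def ind (S : Finset (Finset ℤ)) : (Finset ℤ) →₀ ℕ := ∑ e ∈ S, Finsupp.single e 1

lemma ind_apply (S : Finset (Finset ℤ)) (f : Finset ℤ) :
    ind S f = if f ∈ S then 1 else 0 := by
  classical
  rw [ind, Finsupp.finset_sum_apply]
  simp [Finsupp.single_apply, Finset.sum_ite_eq']

lemma ind_support (S : Finset (Finset ℤ)) : (ind S).support = S := by
  ext f; simp [Finsupp.mem_support_iff, ind_apply]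

lemma ind_inj {S T : Finset (Finset ℤ)} (h : ind S = ind T) : S = T := by
  rw [← ind_support S, ← ind_support T, h]

lemma prod_X_eq (S : Finset (Finset ℤ)) :
    (∏ e ∈ S, (X e : MvPolynomial (Finset ℤ) K)) = monomial (ind S) 1 := by
  classical
  induction S using Finset.induction with
  | empty => simp [ind]
  | insert _ _ hx ih =>
      rw [Finset.prod_insert hx, ih, X, monomial_mul, one_mul]
      congr 1
      rw [ind, ind, Finset.sum_insert hx]

lemma ind_degree (S : Finset (Finset ℤ)) : ((ind S).sum fun _ n => n) = S.card := by
  classical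
  rw [Finsupp.sum, ind_support]
  simp [ind_apply]

lemma mem_matchings {W : Finset ℤ} {k : ℕ} {M : Finset (Finset ℤ)} :
    M ∈ matchings W k ↔ M ⊆ W.powersetCard 2 ∧ M.card = k ∧
      ∀ e ∈ M, ∀ f ∈ M, e ≠ f → Disjoint e f := by
  simp [matchings, Finset.mem_filter, Finset.mem_powerset, and_assoc]

lemma coeff_Phi (W : Finset ℤ) (k : ℕ) (N : Finset (Finset ℤ)) :
    coeff (ind N) (Phi K W k) = if N ∈ matchings W k then 1 else 0 := by
  classical
  rw [Phi]
  rw [show (∑ M ∈ matchings W k, ∏ e ∈ M, (X e : MvPolynomial (Finset ℤ) K))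
      = ∑ M ∈ matchings W k, monomial (ind M) 1 from
    Finset.sum_congr rfl fun M _ => prod_X_eq M]
  rw [coeff_sum]
  rw [show (∑ M ∈ matchings W k, coeff (ind N) ((monomial (ind M)) (1:K)))
      = ∑ M ∈ matchings W k, if M = N then 1 else 0 from
    Finset.sum_congr rfl fun M _ => by
      rw [coeff_monomial]
      by_cases h : M = N
      · simp [h]
      · rw [if_neg (fun hh => h (ind_inj hh)), if_neg h]]
  rw [Finset.sum_ite_eq' (matchings W k) N (fun _ => (1:K))]

lemma Phi_zero (W : Finset ℤ) : Phi K W 0 = 1 := by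
  have : matchings W 0 = {∅} := by
    ext M
    simp only [mem_matchings, Finset.mem_singleton, Finset.card_eq_zero]
    constructor
    · rintro ⟨-, h, -⟩; exact h
    · rintro rfl; simp
  rw [Phi, this]; simp

lemma ind_sub_single {S : Finset (Finset ℤ)} {e : Finset ℤ} (h : e ∈ S) :
    ind S - Finsupp.single e 1 = ind (S.erase e) := by
  classical
  ext f
  rw [Finsupp.tsub_apply, ind_apply, ind_apply, Finsupp.single_apply]
  by_cases hf : f = e
  · subst hf; simp [h]
  · simp [hf, Finset.mem_erase, Ne.symm hf]

lemma pderiv_prod_X (e : Finset ℤ) (S : Finset (Finset ℤ)) :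
    pderiv e (∏ f ∈ S, (X f : MvPolynomial (Finset ℤ) K)) =
      if e ∈ S then ∏ f ∈ S.erase e, X f else 0 := by
  classical
  rw [prod_X_eq, pderiv_monomial]
  by_cases h : e ∈ S
  · rw [if_pos h, prod_X_eq, ind_sub_single h, ind_apply, if_pos h]
    norm_num
  · rw [if_neg h, ind_apply, if_neg h]
    simp

lemma pderiv_Phi_zero {W : Finset ℤ} {e : Finset ℤ} (he : e ∉ W.powersetCard 2) (j : ℕ) :
    pderiv e (Phi K W j) = 0 := by
  classical
  rw [Phi, map_sum]
  refine Finset.sum_eq_zero fun M hM => ?_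
  rw [pderiv_prod_X, if_neg]
  intro hem
  exact he ((mem_matchings.1 hM).1 hem)

lemma pderiv_Phi {W : Finset ℤ} {e : Finset ℤ} (he : e ∈ W.powersetCard 2) (j : ℕ) :
    pderiv e (Phi K W (j+1)) = Phi K (W \ e) j := by
  classical
  obtain ⟨heW, hecard⟩ := Finset.mem_powersetCard.1 he
  have hene : e ≠ ∅ := by
    intro h; rw [h] at hecard; simp at hecard
  rw [Phi, map_sum]
  rw [show (∑ M ∈ matchings W (j+1), pderiv e (∏ f ∈ M, (X f : MvPolynomial (Finset ℤ) K)))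
      = ∑ M ∈ matchings W (j+1), if e ∈ M then ∏ f ∈ M.erase e, X f else 0 from
    Finset.sum_congr rfl fun M _ => pderiv_prod_X e M]
  rw [← Finset.sum_filter]
  rw [Phi]
  refine Finset.sum_bij' (fun M _ => M.erase e) (fun M' _ => insert e M') ?_ ?_ ?_ ?_ ?_
  · intro M hM
    rw [Finset.mem_filter] at hM
    obtain ⟨hM, heM⟩ := hM
    obtain ⟨hsub, hcard, hdisj⟩ := mem_matchings.1 hM
    refine mem_matchings.2 ⟨?_, ?_, ?_⟩
    · intro f hf
      obtain ⟨hfe, hfM⟩ := Finset.mem_erase.1 hf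
      obtain ⟨hfW, hfcard⟩ := Finset.mem_powersetCard.1 (hsub hfM)
      refine Finset.mem_powersetCard.2 ⟨?_, hfcard⟩
      rw [Finset.subset_sdiff]
      exact ⟨hfW, hdisj f hfM e heM hfe⟩
    · rw [Finset.card_erase_of_mem heM, hcard]; rfl
    · intro a ha b hb hab
      exact hdisj a (Finset.mem_of_mem_erase ha) b (Finset.mem_of_mem_erase hb) hab
  · intro M' hM'
    obtain ⟨hsub, hcard, hdisj⟩ := mem_matchings.1 hM'
    have heM' : e ∉ M' := by
      intro h
      obtain ⟨hfW, -⟩ := Finset.mem_powersetCard.1 (hsub h)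
      rw [Finset.subset_sdiff] at hfW
      exact hene (Finset.eq_empty_of_forall_notMem fun x hx =>
        (Finset.disjoint_left.1 hfW.2) hx hx)
    rw [Finset.mem_filter]
    constructor
    · refine mem_matchings.2 ⟨?_, ?_, ?_⟩
      · intro f hf
        rcases Finset.mem_insert.1 hf with rfl | hfM
        · exact he
        · obtain ⟨hfW, hfcard⟩ := Finset.mem_powersetCard.1 (hsub hfM)
          rw [Finset.subset_sdiff] at hfW
          exact Finset.mem_powersetCard.2 ⟨hfW.1, hfcard⟩
      · rw [Finset.card_insert_of_notMem heM', hcard]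
      · intro a ha b hb hab
        rcases Finset.mem_insert.1 ha with rfl | haM
        · rcases Finset.mem_insert.1 hb with rfl | hbM
          · exact absurd rfl hab
          · obtain ⟨hfW, -⟩ := Finset.mem_powersetCard.1 (hsub hbM)
            rw [Finset.subset_sdiff] at hfW
            exact (hfW.2).symm
        · rcases Finset.mem_insert.1 hb with rfl | hbM
          · obtain ⟨hfW, -⟩ := Finset.mem_powersetCard.1 (hsub haM)
            rw [Finset.subset_sdiff] at hfW
            exact hfW.2
          · exact hdisj a haM b hbM hab
    · exact Finset.mem_insert_self e M'
  · intro M hM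
    rw [Finset.mem_filter] at hM
    exact Finset.insert_erase hM.2
  · intro M' hM'
    obtain ⟨hsub, -, -⟩ := mem_matchings.1 hM'
    have heM' : e ∉ M' := by
      intro h
      obtain ⟨hfW, -⟩ := Finset.mem_powersetCard.1 (hsub h)
      rw [Finset.subset_sdiff] at hfW
      exact hene (Finset.eq_empty_of_forall_notMem fun x hx =>
        (Finset.disjoint_left.1 hfW.2) hx hx)
    exact Finset.erase_insert heM'
  · intro M hM
    rfl

/-- apply a list of partial derivatives -/
def applyD (L : List (Finset ℤ)) (p : MvPolynomial (Finset ℤ) K) : MvPolynomial (Finset ℤ) K :=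
  L.foldr (fun i q => pderiv i q) p

def unionL (L : List (Finset ℤ)) : Finset ℤ := L.foldr (· ∪ ·) ∅

lemma mem_unionL {L : List (Finset ℤ)} {x : ℤ} : x ∈ unionL L ↔ ∃ e ∈ L, x ∈ e := by
  induction L with
  | nil => simp [unionL]
  | cons a l ih => simp [unionL, List.foldr] at ih ⊢; rw [ih]

lemma subset_unionL {L : List (Finset ℤ)} {e : Finset ℤ} (h : e ∈ L) : e ⊆ unionL L :=
  fun x hx => mem_unionL.2 ⟨e, h, hx⟩

lemma disjoint_unionL {L : List (Finset ℤ)} {e : Finset ℤ} (h : ∀ f ∈ L, Disjoint e f) :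
    Disjoint e (unionL L) := by
  rw [Finset.disjoint_right]
  intro x hx hxe
  obtain ⟨f, hf, hxf⟩ := mem_unionL.1 hx
  exact (Finset.disjoint_left.1 (h f hf)) hxe hxf

/-- master lemma: iterated derivatives of `Phi` -/
lemma applyD_Phi (L : List (Finset ℤ)) (W : Finset ℤ) (j : ℕ) :
    applyD L (Phi K W j) =
      if L.Pairwise Disjoint ∧ (∀ e ∈ L, e ∈ W.powersetCard 2) ∧ L.length ≤ j
      then Phi K (W \ unionL L) (j - L.length) else 0 := by
  induction L with
  | nil =>
      rw [if_pos]
      · simp [applyD, unionL]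
      · simp
  | cons e L ih =>
      have hstep : applyD (e :: L) (Phi K W j) = pderiv e (applyD L (Phi K W j)) := rfl
      rw [hstep, ih]
      by_cases hL : L.Pairwise Disjoint ∧ (∀ f ∈ L, f ∈ W.powersetCard 2) ∧ L.length ≤ j
      · rw [if_pos hL]
        by_cases hc : (e :: L).Pairwise Disjoint ∧ (∀ f ∈ e :: L, f ∈ W.powersetCard 2) ∧
            (e :: L).length ≤ j
        · rw [if_pos hc]
          obtain ⟨hpw, hmem, hlen⟩ := hc
          have hdisjL : ∀ f ∈ L, Disjoint e f := (List.pairwise_cons.1 hpw).1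
          have heW : e ∈ W.powersetCard 2 := hmem e (List.mem_cons_self)
          obtain ⟨hesub, hecard⟩ := Finset.mem_powersetCard.1 heW
          have he' : e ∈ (W \ unionL L).powersetCard 2 := by
            refine Finset.mem_powersetCard.2 ⟨?_, hecard⟩
            rw [Finset.subset_sdiff]
            exact ⟨hesub, disjoint_unionL hdisjL⟩
          have hlen' : L.length < j := by
            simpa using hlen
          have hj : j - L.length = (j - (L.length + 1)) + 1 := by omega
          rw [hj, pderiv_Phi he']
          have hU : unionL (e :: L) = e ∪ unionL L := rfl
          rw [hU]
          congr 1
          · ext x; simp [Finset.mem_sdiff]; tauto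
        · rw [if_neg hc]
          by_cases hlen : L.length < j
          · have he' : e ∉ (W \ unionL L).powersetCard 2 := by
              intro he'
              obtain ⟨hsub, hcard⟩ := Finset.mem_powersetCard.1 he'
              rw [Finset.subset_sdiff] at hsub
              apply hc
              refine ⟨List.pairwise_cons.2 ⟨fun f hf => ?_, hL.1⟩, ?_, ?_⟩
              · exact Finset.disjoint_of_subset_right (subset_unionL hf) hsub.2
              · intro f hf
                rcases List.mem_cons.1 hf with rfl | hfL
                · exact Finset.mem_powersetCard.2 ⟨hsub.1, hcard⟩
                · exact hL.2.1 f hfL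
              · simpa using hlen
            exact pderiv_Phi_zero he' _
          · have hj0 : j - L.length = 0 := by omega
            rw [hj0, Phi_zero]
            exact pderiv_one
      · rw [if_neg hL, if_neg, map_zero]
        intro hc
        exact hL ⟨(List.pairwise_cons.1 hc.1).2,
          fun f hf => hc.2.1 f (List.mem_cons_of_mem e hf),
          le_trans (Nat.le_succ _) hc.2.2⟩

lemma applyD_append (a b : List (Finset ℤ)) (p : MvPolynomial (Finset ℤ) K) :
    applyD (a ++ b) p = applyD a (applyD b p) := by
  simp [applyD, List.foldr_append]

lemma applyD_replicate (n : ℕ) (i : Finset ℤ) (p : MvPolynomial (Finset ℤ) K) :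
    applyD (List.replicate n i) p = (⇑(pderiv (R := K) i))^[n] p := by
  induction n with
  | zero => simp [applyD]
  | succ n ih =>
      rw [List.replicate_succ]
      show pderiv i (applyD (List.replicate n i) p) = _
      rw [ih, Function.iterate_succ_apply']

lemma dmon_eq_applyD (m : (Finset ℤ) →₀ ℕ) (p : MvPolynomial (Finset ℤ) K) :
    dmon m p = applyD (m.support.toList.flatMap fun i => List.replicate (m i) i) p := by
  rw [dmon]
  generalize m.support.toList = l
  induction l with
  | nil => simp [applyD]
  | cons a l ih =>
      rw [List.flatMap_cons, applyD_append, applyD_replicate, ← ih]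
      rfl

/-- vertex set of a set of edges -/
def vtx (S : Finset (Finset ℤ)) : Finset ℤ := S.biUnion id

lemma flatMap_singleton_eq {l : List (Finset ℤ)} {f : Finset ℤ → List (Finset ℤ)}
    (h : ∀ i ∈ l, f i = [i]) : l.flatMap f = l := by
  induction l with
  | nil => simp
  | cons a t ih =>
      rw [List.flatMap_cons, h a (List.mem_cons_self),
        ih fun i hi => h i (List.mem_cons_of_mem a hi)]
      rfl

lemma unionL_toList (S : Finset (Finset ℤ)) : unionL S.toList = vtx S := by
  ext x
  rw [mem_unionL, vtx, Finset.mem_biUnion]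
  simp [Finset.mem_toList]

lemma toList_pairwise_disjoint {S : Finset (Finset ℤ)}
    (h : ∀ e ∈ S, ∀ f ∈ S, e ≠ f → Disjoint e f) : S.toList.Pairwise Disjoint := by
  have hnd : S.toList.Pairwise (· ≠ ·) := S.nodup_toList
  exact hnd.imp_of_mem fun {a b} ha hb hab =>
    h a (Finset.mem_toList.1 ha) b (Finset.mem_toList.1 hb) hab

/-- derivative of Phi along an honest matching -/
lemma dmon_ind_matching {U : Finset ℤ} {S : Finset (Finset ℤ)} {k : ℕ}
    (hsub : S ⊆ U.powersetCard 2)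
    (hdisj : ∀ e ∈ S, ∀ f ∈ S, e ≠ f → Disjoint e f)
    (hcard : S.card ≤ k) :
    dmon (ind S) (Phi K U k) = Phi K (U \ vtx S) (k - S.card) := by
  rw [dmon_eq_applyD]
  have hl : ((ind S).support.toList.flatMap fun i => List.replicate ((ind S) i) i)
      = S.toList := by
    rw [ind_support]
    refine flatMap_singleton_eq fun i hi => ?_
    rw [ind_apply, if_pos (Finset.mem_toList.1 hi)]
    rfl
  rw [hl, applyD_Phi, if_pos, unionL_toList, Finset.length_toList]
  exact ⟨toList_pairwise_disjoint hdisj,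
    fun e he => hsub (Finset.mem_toList.1 he),
    by rw [Finset.length_toList]; exact hcard⟩

lemma vtx_card {S : Finset (Finset ℤ)} (h2 : ∀ e ∈ S, e.card = 2)
    (hdisj : ∀ e ∈ S, ∀ f ∈ S, e ≠ f → Disjoint e f) :
    (vtx S).card = 2 * S.card := by
  rw [vtx]
  rw [show (S.biUnion id) = S.biUnion (fun e => e) from rfl]
  rw [Finset.card_biUnion (fun e he f hf hef => hdisj e he f hf hef)]
  rw [Finset.sum_congr rfl fun e he => h2 e he]
  simp [Nat.mul_comm]

lemma vtx_subset {U : Finset ℤ} {S : Finset (Finset ℤ)} (hsub : S ⊆ U.powersetCard 2) :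
    vtx S ⊆ U := by
  intro x hx
  obtain ⟨e, he, hxe⟩ := Finset.mem_biUnion.1 hx
  exact (Finset.mem_powersetCard.1 (hsub he)).1 hxe

/-! ### canonical matching -/

section CM
variable {V : Finset ℤ} {d : ℕ} (hV : V.card = 2 * d)

private def sl (V : Finset ℤ) : List ℤ := V.sort (· ≤ ·)

lemma sl_len : (sl V).length = V.card := Finset.length_sort _

lemma sl_mem {x : ℤ} : x ∈ sl V ↔ x ∈ V := Finset.mem_sort _

lemma sl_nodup : (sl V).Nodup := Finset.sort_nodup _ _

include hV in
lemma cm_elem {i : ℕ} (hi : i < d) {t : ℕ} (ht : t ≤ 1) :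
    (sl V).getD (2 * i + t) 0 ∈ V ∧ 2 * i + t < (sl V).length := by
  have hlt : 2 * i + t < (sl V).length := by rw [sl_len, hV]; omega
  refine ⟨?_, hlt⟩
  rw [List.getD_eq_getElem _ _ hlt]
  exact sl_mem.1 (List.getElem_mem hlt)

include hV in
lemma cm_getD_inj {i j : ℕ} (hi : i < (sl V).length) (hj : j < (sl V).length)
    (h : (sl V).getD i 0 = (sl V).getD j 0) : i = j := by
  rw [List.getD_eq_getElem _ _ hi, List.getD_eq_getElem _ _ hj] at h
  exact ((sl_nodup (V := V)).getElem_inj_iff).1 h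

include hV in
lemma cm_edge_card {i : ℕ} (hi : i < d) :
    ({(sl V).getD (2 * i) 0, (sl V).getD (2 * i + 1) 0} : Finset ℤ).card = 2 := by
  rw [Finset.card_insert_of_notMem, Finset.card_singleton]
  simp only [Finset.mem_singleton]
  intro h
  have := cm_getD_inj hV (cm_elem hV hi (le_refl 1)).2 (cm_elem hV hi (Nat.zero_le 1)).2 h.symm
  omega

include hV in
lemma cm_sub : canonMatching V ⊆ V.powersetCard 2 := by
  intro e he
  rw [canonMatching] at he
  obtain ⟨i, hi, rfl⟩ := Finset.mem_image.1 he
  rw [Finset.mem_range, hV, Nat.mul_div_cancel_left _ (by norm_num : 0 < 2)] at hi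
  refine Finset.mem_powersetCard.2 ⟨?_, cm_edge_card hV hi⟩
  intro x hx
  rcases Finset.mem_insert.1 hx with rfl | hx
  · exact (cm_elem hV hi (Nat.zero_le 1)).1
  · rw [Finset.mem_singleton] at hx; subst hx
    exact (cm_elem hV hi (le_refl 1)).1

include hV in
lemma cm_disj : ∀ e ∈ canonMatching V, ∀ f ∈ canonMatching V, e ≠ f → Disjoint e f := by
  intro e he f hf hef
  rw [canonMatching] at he hf
  obtain ⟨i, hi, rfl⟩ := Finset.mem_image.1 he
  obtain ⟨j, hj, rfl⟩ := Finset.mem_image.1 hf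
  rw [Finset.mem_range, hV, Nat.mul_div_cancel_left _ (by norm_num : 0 < 2)] at hi hj
  have hij : i ≠ j := fun h => hef (by rw [h])
  rw [Finset.disjoint_left]
  intro a ha hb
  have key : ∀ (s t : ℕ), s ≤ 1 → t ≤ 1 →
      (sl V).getD (2*i+s) 0 = (sl V).getD (2*j+t) 0 → False := by
    intro s t hs ht h
    have := cm_getD_inj hV (cm_elem hV hi hs).2 (cm_elem hV hj ht).2 h
    omega
  have ha' : a = (sl V).getD (2*i+0) 0 ∨ a = (sl V).getD (2*i+1) 0 := by
    simpa [sl] using ha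
  have hb' : a = (sl V).getD (2*j+0) 0 ∨ a = (sl V).getD (2*j+1) 0 := by
    simpa [sl] using hb
  rcases ha' with h1 | h1 <;> rcases hb' with h2 | h2
  all_goals first
    | exact key 0 0 (by omega) (by omega) (h1.symm.trans h2)
    | exact key 0 1 (by omega) (by omega) (h1.symm.trans h2)
    | exact key 1 0 (by omega) (by omega) (h1.symm.trans h2)
    | exact key 1 1 (by omega) (by omega) (h1.symm.trans h2)

include hV in
lemma cm_card : (canonMatching V).card = d := by
  rw [canonMatching, hV, Nat.mul_div_cancel_left _ (by norm_num : 0 < 2)]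
  rw [Finset.card_image_of_injOn, Finset.card_range]
  intro i hi j hj hij
  simp only at hij
  rw [Finset.mem_coe, Finset.mem_range] at hi hj
  have hij' : ({(sl V).getD (2*i) 0, (sl V).getD (2*i+1) 0} : Finset ℤ)
      = {(sl V).getD (2*j) 0, (sl V).getD (2*j+1) 0} := hij
  have h0 : (sl V).getD (2*i) 0 ∈ ({(sl V).getD (2 * j) 0, (sl V).getD (2 * j + 1) 0} : Finset ℤ) := by
    rw [← hij']; exact Finset.mem_insert_self _ _
  rcases Finset.mem_insert.1 h0 with h | h
  · have := cm_getD_inj hV (cm_elem hV hi (Nat.zero_le 1)).2 (cm_elem hV hj (Nat.zero_le 1)).2 h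
    omega
  · rw [Finset.mem_singleton] at h
    have := cm_getD_inj hV (cm_elem hV hi (Nat.zero_le 1)).2 (cm_elem hV hj (le_refl 1)).2 h
    omega

include hV in
lemma cm_vtx : vtx (canonMatching V) = V := by
  ext x
  rw [vtx, Finset.mem_biUnion]
  constructor
  · rintro ⟨e, he, hx⟩
    exact (Finset.mem_powersetCard.1 (cm_sub hV he)).1 hx
  · intro hx
    have hx' : x ∈ sl V := sl_mem.2 hx
    obtain ⟨i, hilt, hxi⟩ := List.mem_iff_getElem.1 hx'
    have hi2 : i < 2 * d := by rw [sl_len, hV] at hilt; exact hilt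
    refine ⟨{(sl V).getD (2 * (i/2)) 0, (sl V).getD (2 * (i/2) + 1) 0}, ?_, ?_⟩
    · rw [canonMatching, hV, Nat.mul_div_cancel_left _ (by norm_num : 0 < 2)]
      exact Finset.mem_image.2 ⟨i/2, Finset.mem_range.2 (by omega), rfl⟩
    · have hxd : x = (sl V).getD i 0 := by rw [List.getD_eq_getElem _ _ hilt, hxi]
      rcases Nat.even_or_odd i with he | ho
      · obtain ⟨q, hq⟩ := he
        have hieq : x = (sl V).getD (2*(i/2)) 0 := by rw [hxd]; congr 1; omega
        rw [hieq]
        exact Finset.mem_insert_self _ _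
      · obtain ⟨q, hq⟩ := ho
        have hieq : x = (sl V).getD (2*(i/2)+1) 0 := by rw [hxd]; congr 1; omega
        rw [hieq]
        exact Finset.mem_insert.2 (Or.inr (Finset.mem_singleton_self _))
end CM
section Comb
variable [CharZero K]


lemma count_extensions {U V T : Finset ℤ} {s t j : ℕ}
    (hT : T ⊆ U) (hV : V ⊆ U) (hVcard : V.card = s) (hTcard : T.card = j)
    (hDisj : Disjoint V T) (hjt : j ≤ t) :
    ((U.powersetCard t).filter (fun S => T ⊆ S ∧ Disjoint V S)).card
      = Nat.choose (U.card - s - j) (t - j) := by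
  classical
  have key : ((U.powersetCard t).filter (fun S => T ⊆ S ∧ Disjoint V S)).card
      = (((U \ V) \ T).powersetCard (t - j)).card := by
    refine Finset.card_bij' (fun S _ => S \ T) (fun R _ => R ∪ T) ?_ ?_ ?_ ?_
    · intro S hS
      rw [Finset.mem_filter] at hS
      obtain ⟨hS, hTS, hVS⟩ := hS
      obtain ⟨hSU, hScard⟩ := Finset.mem_powersetCard.1 hS
      refine Finset.mem_powersetCard.2 ⟨?_, ?_⟩
      · rw [Finset.subset_sdiff, Finset.subset_sdiff]
        exact ⟨⟨fun x hx => hSU (Finset.mem_sdiff.1 hx).1,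
          Finset.disjoint_of_subset_left Finset.sdiff_subset hVS.symm⟩,
          sdiff_disjoint⟩
      · rw [Finset.card_sdiff_of_subset hTS, hScard, hTcard]
    · intro R hR
      obtain ⟨hRU, hRcard⟩ := Finset.mem_powersetCard.1 hR
      rw [Finset.subset_sdiff, Finset.subset_sdiff] at hRU
      rw [Finset.mem_filter]
      refine ⟨Finset.mem_powersetCard.2 ⟨?_, ?_⟩, Finset.subset_union_right, ?_⟩
      · exact Finset.union_subset hRU.1.1 hT
      · rw [Finset.card_union_of_disjoint hRU.2, hRcard, hTcard]
        omega
      · exact Finset.disjoint_union_right.2 ⟨hRU.1.2.symm, hDisj⟩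
    · intro S hS
      rw [Finset.mem_filter] at hS
      exact Finset.sdiff_union_of_subset hS.2.1
    · intro R hR
      obtain ⟨hRU, -⟩ := Finset.mem_powersetCard.1 hR
      rw [Finset.subset_sdiff] at hRU
      exact Finset.union_sdiff_cancel_right hRU.2
  rw [key, Finset.card_powersetCard]
  have hTU : T ⊆ U \ V := Finset.subset_sdiff.2 ⟨hT, hDisj.symm⟩
  rw [Finset.card_sdiff_of_subset hTU, Finset.card_sdiff_of_subset hV, hVcard, hTcard]

lemma disj_matrix_inj (U : Finset ℤ) (s t : ℕ) (hst : s ≤ t) (hn : s + t ≤ U.card)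
    (c : Finset ℤ → K)
    (h : ∀ S ∈ U.powersetCard t,
      ∑ V ∈ U.powersetCard s, (if Disjoint V S then c V else 0) = 0) :
    ∀ V₀ ∈ U.powersetCard s, c V₀ = 0 := by
  classical
  have hgen : ∀ T : Finset ℤ, T ⊆ U → T.card ≤ t →
      ∑ V ∈ U.powersetCard s, (if Disjoint V T then c V else 0) = 0 := by
    intro T hTU hTt
    set j := T.card with hj
    set C : ℕ := Nat.choose (U.card - s - j) (t - j) with hC
    have hCpos : 0 < C := Nat.choose_pos (by omega)
    have hE : ∑ S ∈ (U.powersetCard t).filter (fun S => T ⊆ S),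
        (∑ V ∈ U.powersetCard s, if Disjoint V S then c V else 0) = 0 :=
      Finset.sum_eq_zero fun S hS => h S (Finset.mem_filter.1 hS).1
    rw [Finset.sum_comm] at hE
    have hinner : ∀ V ∈ U.powersetCard s,
        (∑ S ∈ (U.powersetCard t).filter (fun S => T ⊆ S),
          if Disjoint V S then c V else 0)
        = if Disjoint V T then (C : K) * c V else 0 := by
      intro V hV
      obtain ⟨hVU, hVcard⟩ := Finset.mem_powersetCard.1 hV
      rw [← Finset.sum_filter, Finset.filter_filter, Finset.sum_const]
      by_cases hd : Disjoint V T
      · rw [if_pos hd, count_extensions hTU hVU hVcard hj.symm hd hTt]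
        simp [hC, nsmul_eq_mul]
      · rw [if_neg hd]
        have : (U.powersetCard t).filter (fun S => T ⊆ S ∧ Disjoint V S) = ∅ := by
          refine Finset.filter_false_of_mem fun S hS => ?_
          rintro ⟨hTS, hVS⟩
          exact hd (Finset.disjoint_of_subset_right hTS hVS)
        rw [this]
        simp
    rw [Finset.sum_congr rfl hinner] at hE
    have : ∑ V ∈ U.powersetCard s, (if Disjoint V T then (C:K) * c V else 0)
        = (C : K) * ∑ V ∈ U.powersetCard s, (if Disjoint V T then c V else 0) := by
      rw [Finset.mul_sum]
      refine Finset.sum_congr rfl fun V _ => ?_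
      by_cases hd : Disjoint V T <;> simp [hd]
    rw [this] at hE
    rcases mul_eq_zero.1 hE with h0 | h0
    · exact absurd h0 (Nat.cast_ne_zero.2 hCpos.ne')
    · exact h0
  intro V₀ hV₀
  obtain ⟨hV₀U, hV₀card⟩ := Finset.mem_powersetCard.1 hV₀
  have hE : ∑ T ∈ V₀.powerset, (-1 : K) ^ T.card *
      (∑ V ∈ U.powersetCard s, if Disjoint V T then c V else 0) = 0 := by
    refine Finset.sum_eq_zero fun T hT => ?_
    rw [hgen T ((Finset.mem_powerset.1 hT).trans hV₀U)
      (le_trans (Finset.card_le_card (Finset.mem_powerset.1 hT)) (hV₀card ▸ hst)),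
      mul_zero]
  have hswap : ∑ T ∈ V₀.powerset, (-1 : K) ^ T.card *
      (∑ V ∈ U.powersetCard s, if Disjoint V T then c V else 0)
      = ∑ V ∈ U.powersetCard s, ∑ T ∈ V₀.powerset,
        (if Disjoint V T then (-1 : K) ^ T.card * c V else 0) := by
    rw [show (∑ T ∈ V₀.powerset, (-1 : K) ^ T.card *
        (∑ V ∈ U.powersetCard s, if Disjoint V T then c V else 0))
        = ∑ T ∈ V₀.powerset, ∑ V ∈ U.powersetCard s,
          (if Disjoint V T then (-1 : K) ^ T.card * c V else 0) from
      Finset.sum_congr rfl fun T _ => by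
        rw [Finset.mul_sum]
        exact Finset.sum_congr rfl fun V _ => by
          by_cases hd : Disjoint V T <;> simp [hd]]
    exact Finset.sum_comm
  rw [hswap] at hE
  have hinner2 : ∀ V ∈ U.powersetCard s,
      (∑ T ∈ V₀.powerset, if Disjoint V T then (-1 : K) ^ T.card * c V else 0)
      = if V = V₀ then c V else 0 := by
    intro V hV
    obtain ⟨hVU, hVcard⟩ := Finset.mem_powersetCard.1 hV
    have hfil : V₀.powerset.filter (fun T => Disjoint V T) = (V₀ \ V).powerset := by
      ext T
      rw [Finset.mem_filter, Finset.mem_powerset, Finset.mem_powerset, Finset.subset_sdiff]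
      exact ⟨fun ⟨h1, h2⟩ => ⟨h1, h2.symm⟩, fun ⟨h1, h2⟩ => ⟨h1, h2.symm⟩⟩
    rw [← Finset.sum_filter, hfil]
    have hsum : (∑ T ∈ (V₀ \ V).powerset, (-1 : K) ^ T.card * c V)
        = ((∑ T ∈ (V₀ \ V).powerset, (-1 : ℤ) ^ T.card : ℤ) : K) * c V := by
      rw [← Finset.sum_mul]
      push_cast
      rfl
    rw [hsum, Finset.sum_powerset_neg_one_pow_card]
    by_cases hVV : V = V₀
    · subst hVV
      rw [if_pos (by simp), if_pos rfl]
      simp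
    · rw [if_neg, if_neg hVV]
      · simp
      · rw [Finset.sdiff_eq_empty_iff_subset]
        intro hsub
        exact hVV (Finset.eq_of_subset_of_card_le hsub (by rw [hVcard, hV₀card])).symm
  rw [Finset.sum_congr rfl hinner2, Finset.sum_ite_eq' (U.powersetCard s) V₀ c,
    if_pos hV₀] at hE
  exact hE

end Comb

section Classify
variable {K : Type*} [Field K]

lemma diffOp_monomial (Phi0 : MvPolynomial (Finset ℤ) K) (m : (Finset ℤ) →₀ ℕ) :
    diffOp K Phi0 (monomial m 1) = dmon m Phi0 := by
  have h := (basisMonomials (Finset ℤ) K).constr_basis K (fun m => dmon m Phi0) m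
  rwa [show ((basisMonomials (Finset ℤ) K) m) = monomial m 1 from by
    rw [coe_basisMonomials]] at h

lemma mem_Ann_iff (Phi0 f : MvPolynomial (Finset ℤ) K) :
    f ∈ Ann K Phi0 ↔ diffOp K Phi0 f = 0 := LinearMap.mem_ker

lemma multilinear_of_good {m : (Finset ℤ) →₀ ℕ} {U : Finset ℤ}
    (hpw : (m.support.toList.flatMap fun i => List.replicate (m i) i).Pairwise Disjoint)
    (hmem : ∀ e ∈ (m.support.toList.flatMap fun i => List.replicate (m i) i),
      e ∈ U.powersetCard 2) :
    ∀ i, m i ≤ 1 := by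
  intro i
  by_contra hcon
  push_neg at hcon
  have hi0 : m i ≠ 0 := by omega
  have hiL : i ∈ m.support.toList := Finset.mem_toList.2 (Finsupp.mem_support_iff.2 hi0)
  obtain ⟨l1, l2, hl⟩ := List.append_of_mem hiL
  have hrepl : List.replicate (m i) i = i :: i :: List.replicate (m i - 2) i := by
    have h2 : m i = 2 + (m i - 2) := by omega
    conv_lhs => rw [h2]
    rw [List.replicate_add]
    rfl
  have hflat : (m.support.toList.flatMap fun a => List.replicate (m a) a)
      = (l1.flatMap fun a => List.replicate (m a) a) ++
        ((i :: i :: List.replicate (m i - 2) i) ++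
          (l2.flatMap fun a => List.replicate (m a) a)) := by
    rw [hl, List.flatMap_append, List.flatMap_cons, hrepl]
  rw [hflat] at hpw
  have hpw2 := (List.pairwise_append.1 hpw).2.1
  have hpw3 := (List.pairwise_append.1 hpw2).1
  have hdisj : Disjoint i i := (List.pairwise_cons.1 hpw3).1 i (List.mem_cons_self)
  have hie : i = ∅ := by simpa using disjoint_self.1 hdisj
  have hiU : i ∈ U.powersetCard 2 := by
    refine hmem i ?_
    rw [hflat]
    exact List.mem_append.2 (Or.inr (List.mem_append.2 (Or.inl (List.mem_cons_self))))
  have := (Finset.mem_powersetCard.1 hiU).2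
  rw [hie] at this
  simp at this

lemma classify {U : Finset ℤ} {k d : ℕ} (m : (Finset ℤ) →₀ ℕ)
    (hdeg : (m.sum fun _ n => n) = d) :
    dmon m (Phi K U k) = 0 ∨
    (m = ind m.support ∧ m.support ⊆ U.powersetCard 2 ∧
      (∀ e ∈ m.support, ∀ f ∈ m.support, e ≠ f → Disjoint e f) ∧ m.support.card = d) := by
  classical
  rw [dmon_eq_applyD, applyD_Phi]
  set L := m.support.toList.flatMap fun i => List.replicate (m i) i with hL
  by_cases hc : L.Pairwise Disjoint ∧ (∀ e ∈ L, e ∈ U.powersetCard 2) ∧ L.length ≤ k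
  · right
    have hml : ∀ i, m i ≤ 1 := multilinear_of_good hc.1 hc.2.1
    have hmem : ∀ i ∈ m.support, i ∈ L := by
      intro i hi
      refine List.mem_flatMap.2 ⟨i, Finset.mem_toList.2 hi, ?_⟩
      rw [List.mem_replicate]
      exact ⟨Finsupp.mem_support_iff.1 hi, rfl⟩
    refine ⟨?_, fun e he => hc.2.1 e (hmem e he), ?_, ?_⟩
    · ext i
      rw [ind_apply]
      by_cases h : i ∈ m.support
      · rw [if_pos h]
        have := Finsupp.mem_support_iff.1 h
        have := hml i
        omega
      · rw [if_neg h]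
        exact Finsupp.notMem_support_iff.1 h
    · intro a ha b hb hab
      haveI : Std.Symm (α := Finset ℤ) Disjoint := ⟨fun x y h => h.symm⟩
      exact hc.1.forall (hmem a ha) (hmem b hb) hab
    · rw [← hdeg, Finsupp.sum]
      rw [Finset.card_eq_sum_ones]
      refine Finset.sum_congr rfl fun i hi => ?_
      have := Finsupp.mem_support_iff.1 hi
      have := hml i
      omega
  · left
    rw [if_neg hc]

end Classify

end Aux

/-- when `2k ≤ |U|` and `2d ≤ k`, the images in `A_{U,k} = P_U/Ann(Φ_{U,k})` of
the monomials `x^{M(V)}`, `V ∈ C(U,2d)`, form a basis of the degree-`d` component: they are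
linearly independent and span the image of the degree-`d` homogeneous polynomials. -/
theorem canonical_monomials_basis {K : Type*} [Field K] [CharZero K]
    (U : Finset ℤ) (hU : U.Nonempty) (k : ℕ) (hk : 2 * k ≤ U.card)
    (d : ℕ) (hd : 2 * d ≤ k) :
    LinearIndependent K (fun V : (U.powersetCard (2 * d) : Finset (Finset ℤ)) =>
      (Ann K (Phi K U k)).mkQ (∏ e ∈ canonMatching V.1, X e)) ∧
    Submodule.span K (Set.range fun V : (U.powersetCard (2 * d) : Finset (Finset ℤ)) =>
        (Ann K (Phi K U k)).mkQ (∏ e ∈ canonMatching V.1, X e)) =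
      Submodule.map (Ann K (Phi K U k)).mkQ (homogeneousSubmodule (Finset ℤ) K d) := by
  classical
  have hdk : d ≤ k := by omega
  have hVfact : ∀ V : Finset ℤ, V ∈ U.powersetCard (2*d) →
      diffOp K (Phi K U k) (∏ e ∈ canonMatching V, X e) = Phi K (U \ V) (k - d) := by
    intro V hV
    obtain ⟨hVU, hVcard⟩ := Finset.mem_powersetCard.1 hV
    have hsub : canonMatching V ⊆ U.powersetCard 2 :=
      (cm_sub hVcard).trans (Finset.powersetCard_mono hVU)
    have hcd : (canonMatching V).card = d := cm_card hVcard
    rw [prod_X_eq, diffOp_monomial,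
      dmon_ind_matching hsub (cm_disj hVcard) (by rw [hcd]; exact hdk), hcd, cm_vtx hVcard]
  constructor
  · -- linear independence
    rw [Fintype.linearIndependent_iff]
    intro g hg
    have hmem : (∑ V : (U.powersetCard (2*d) : Finset (Finset ℤ)),
        g V • ∏ e ∈ canonMatching V.1, X e) ∈ Ann K (Phi K U k) := by
      rw [← Submodule.Quotient.mk_eq_zero (Ann K (Phi K U k)), ← Submodule.mkQ_apply, map_sum]
      simpa [map_smul] using hg
    rw [mem_Ann_iff, map_sum] at hmem
    have hsum : (∑ V : (U.powersetCard (2*d) : Finset (Finset ℤ)),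
        g V • Phi K (U \ V.1) (k - d)) = 0 := by
      rw [← hmem]
      refine Finset.sum_congr rfl fun V _ => ?_
      rw [map_smul, hVfact V.1 V.2]
    set c : Finset ℤ → K :=
      fun W => if hW : W ∈ U.powersetCard (2*d) then g ⟨W, hW⟩ else 0 with hcdef
    have hext : ∀ S ∈ U.powersetCard (2*(k-d)),
        ∑ V ∈ U.powersetCard (2*d), (if Disjoint V S then c V else 0) = 0 := by
      intro S hS
      obtain ⟨hSU, hScard⟩ := Finset.mem_powersetCard.1 hS
      have hcond : ∀ V : Finset ℤ, V ∈ U.powersetCard (2*d) →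
          ((canonMatching S ∈ matchings (U \ V) (k-d)) ↔ Disjoint V S) := by
        intro V hV
        obtain ⟨hVU, hVcard⟩ := Finset.mem_powersetCard.1 hV
        constructor
        · intro hmatch
          have hsub' := (mem_matchings.1 hmatch).1
          have hSsub : S ⊆ U \ V := by
            rw [← cm_vtx hScard]
            exact vtx_subset hsub'
          rw [Finset.subset_sdiff] at hSsub
          exact hSsub.2.symm
        · intro hdisj
          refine mem_matchings.2 ⟨?_, cm_card hScard, cm_disj hScard⟩
          refine (cm_sub hScard).trans (Finset.powersetCard_mono ?_)
          rw [Finset.subset_sdiff]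
          exact ⟨hSU, hdisj.symm⟩
      have h0 := congrArg (coeff (ind (canonMatching S))) hsum
      rw [coeff_sum, coeff_zero] at h0
      have h1 : ∀ V : (U.powersetCard (2*d) : Finset (Finset ℤ)),
          coeff (ind (canonMatching S)) (g V • Phi K (U \ V.1) (k - d))
            = if Disjoint V.1 S then g V else 0 := by
        intro V
        rw [coeff_smul, coeff_Phi]
        by_cases hd' : Disjoint V.1 S
        · rw [if_pos ((hcond V.1 V.2).2 hd'), if_pos hd']
          simp
        · rw [if_neg (fun hh => hd' ((hcond V.1 V.2).1 hh)), if_neg hd']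
          simp
      have h0' : (∑ V : (U.powersetCard (2*d) : Finset (Finset ℤ)),
          (if Disjoint V.1 S then g V else 0)) = 0 :=
        Eq.trans (Finset.sum_congr rfl fun V _ => (h1 V).symm) h0
      calc (∑ V ∈ U.powersetCard (2*d), if Disjoint V S then c V else 0)
          = ∑ V ∈ (U.powersetCard (2*d)).attach, (if Disjoint V.1 S then g V else 0) := by
            rw [← Finset.sum_attach (U.powersetCard (2*d))
              (fun W => if Disjoint W S then c W else 0)]
            refine Finset.sum_congr rfl fun V _ => ?_
            rw [hcdef]
            simp only [dif_pos V.2]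
        _ = 0 := by rw [← Finset.univ_eq_attach]; exact h0'
    have hzero := disj_matrix_inj U (2*d) (2*(k-d)) (by omega) (by omega) c hext
    intro V
    have := hzero V.1 V.2
    rw [hcdef] at this
    simpa [dif_pos V.2] using this
  · -- spanning
    apply le_antisymm
    · rw [Submodule.span_le]
      rintro x ⟨V, rfl⟩
      refine Submodule.mem_map_of_mem ?_
      rw [mem_homogeneousSubmodule]
      obtain ⟨hVU, hVcard⟩ := Finset.mem_powersetCard.1 V.2
      rw [prod_X_eq]
      refine isHomogeneous_monomial _ ?_
      rw [show Finsupp.degree (ind (canonMatching V.1))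
          = ((ind (canonMatching V.1)).sum fun _ n => n) from rfl,
        ind_degree, cm_card hVcard]
    · rintro x hx
      obtain ⟨p, hp, rfl⟩ := Submodule.mem_map.1 hx
      rw [mem_homogeneousSubmodule] at hp
      rw [show p = ∑ v ∈ p.support, monomial v (coeff v p) from p.as_sum, map_sum]
      refine Submodule.sum_mem _ fun m hm => ?_
      have hcm : coeff m p ≠ 0 := MvPolynomial.mem_support_iff.1 hm
      have hdeg : (m.sum fun _ n => n) = d := by
        have h1 := hp hcm
        have h2 : Finsupp.degree m = d := by
          rw [Finsupp.degree_eq_weight_one]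
          exact h1
        rw [← h2]
        rfl
      have hmon : (monomial m (coeff m p)) = (coeff m p) • (monomial m (1:K)) := by
        rw [smul_monomial, smul_eq_mul, mul_one]
      rw [hmon, map_smul]
      refine Submodule.smul_mem _ _ ?_
      rcases classify (K := K) (U := U) (k := k) m hdeg with h0 | ⟨hind, hsubm, hdisjm, hcardm⟩
      · have hann : monomial m (1:K) ∈ Ann K (Phi K U k) :=
          (mem_Ann_iff _ _).2 (by rw [diffOp_monomial]; exact h0)
        rw [show (Ann K (Phi K U k)).mkQ (monomial m 1) = 0 from by
          rw [Submodule.mkQ_apply, Submodule.Quotient.mk_eq_zero]; exact hann]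
        exact Submodule.zero_mem _
      · have h2 : ∀ e ∈ m.support, e.card = 2 :=
          fun e he => (Finset.mem_powersetCard.1 (hsubm he)).2
        have hVcard : (vtx m.support).card = 2*d := by
          rw [vtx_card h2 hdisjm, hcardm]
        have hVU : vtx m.support ⊆ U := vtx_subset hsubm
        have hVmem : vtx m.support ∈ U.powersetCard (2*d) :=
          Finset.mem_powersetCard.2 ⟨hVU, hVcard⟩
        have heq : (Ann K (Phi K U k)).mkQ (monomial m 1)
            = (Ann K (Phi K U k)).mkQ (∏ e ∈ canonMatching (vtx m.support), X e) := by
          rw [Submodule.mkQ_apply, Submodule.mkQ_apply, Submodule.Quotient.eq]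
          rw [mem_Ann_iff, map_sub]
          have e1 : diffOp K (Phi K U k) (monomial m (1:K)) = Phi K (U \ vtx m.support) (k - d) := by
            rw [diffOp_monomial]
            conv_lhs => rw [hind]
            rw [dmon_ind_matching hsubm hdisjm (by rw [hcardm]; exact hdk), hcardm]
          rw [e1, hVfact _ hVmem, sub_self]
        rw [heq]
        exact Submodule.subset_span ⟨⟨vtx m.support, hVmem⟩, rfl⟩
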